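/- Let B = AAᵀ/c for A ∈ R^{n×m} and c > 0, and let r be a random vector taking value a_i (the i-th column of A) with probability p_i, where Σ p_i = 1 and E[r rᵀ] = B. Then for any symmetric C ∈ R^{n×n} and any ℓ ≥ 1, E det(xI - C - Σ_{i=1}^{ℓ} r_i r_iᵀ) = (1 - ∂_z)^{ℓ} det(xI - C + zB) |_{z=0}, where r_1,…,r_ℓ are i.i.d. copies of r. -/

import Mathlib

open Matrix Polynomial BigOperators Finset

section Aux

variable {R : Type*} [CommRing R]

/-- Finset version of the derivative of a product. -/
lemma my_derivative_finset_prod {ι : Type*} [DecidableEq ι] (s : Finset ι) (f : ι → R[X]) :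
    derivative (∏ i ∈ s, f i) = ∑ i ∈ s, (∏ j ∈ s.erase i, f j) * derivative (f i) := by
  induction s using Finset.induction_on with
  | empty => simp
  | @insert a s ha ih =>
    rw [Finset.prod_insert ha, derivative_mul, ih, Finset.sum_insert ha,
      Finset.erase_insert ha, Finset.mul_sum]
    congr 1
    · ring
    refine Finset.sum_congr rfl fun i hi => ?_
    rw [Finset.erase_insert_of_ne (by rintro rfl; exact ha hi),
      Finset.prod_insert (fun h => ha (Finset.mem_of_mem_erase h))]
    ring

/-- Derivative of a determinant, column by column. -/
lemma my_derivative_det {k : ℕ} (M : Matrix (Fin k) (Fin k) R[X]) :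
    derivative (det M) = ∑ j, det (M.updateCol j fun i => derivative (M i j)) := by
  simp only [det_apply']
  rw [map_sum, Finset.sum_comm]
  refine Finset.sum_congr rfl fun σ _ => ?_
  rw [derivative_mul, derivative_intCast, zero_mul, zero_add,
    my_derivative_finset_prod, Finset.mul_sum]
  refine Finset.sum_congr rfl fun j _ => ?_
  have hprod : (∏ i, (M.updateCol j fun i => derivative (M i j)) (σ i) i)
      = derivative (M (σ j) j) * ∏ i ∈ Finset.univ.erase j, M (σ i) i := by
    rw [← Finset.mul_prod_erase Finset.univ _ (Finset.mem_univ j)]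
    congr 1
    · rw [updateCol_self]
    · exact Finset.prod_congr rfl fun i hi => updateCol_ne (Finset.mem_erase.mp hi).1
  rw [hprod]; ring

lemma my_updateCol_comm {k : ℕ} (A : Matrix (Fin k) (Fin k) R) {i j : Fin k}
    (h : i ≠ j) (b c : Fin k → R) :
    (A.updateCol i b).updateCol j c = (A.updateCol j c).updateCol i b := by
  ext r t
  by_cases h1 : t = j
  · subst h1
    rw [updateCol_self, updateCol_ne (Ne.symm h), updateCol_self]
  · by_cases h2 : t = i
    · subst h2
      rw [updateCol_ne h1, updateCol_self, updateCol_self]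
    · rw [updateCol_ne h1, updateCol_ne h2, updateCol_ne h2, updateCol_ne h1]

lemma my_subB {k : ℕ} (M : Matrix (Fin k) (Fin k) R) (u v : Fin k → R)
    (s : Finset (Fin k)) :
    ∀ j ∉ s,
      det ((Matrix.of fun i j' => M i j' + if j' ∈ s then u i * v j' else 0).updateCol j u)
        = det (M.updateCol j u) := by
  induction s using Finset.induction_on with
  | empty =>
    intro j _
    congr 1
    ext i j'
    by_cases h : j' = j
    · subst h; rw [updateCol_self, updateCol_self]
    · rw [updateCol_ne h, updateCol_ne h]
      simp
  | @insert a s ha ih =>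
    intro j hj
    have hja : j ≠ a := fun h => hj (h ▸ Finset.mem_insert_self a s)
    have hjs : j ∉ s := fun h => hj (Finset.mem_insert_of_mem h)
    have hN : (Matrix.of fun i j' => M i j' + if j' ∈ insert a s then u i * v j' else 0)
        = (Matrix.of fun i j' => M i j' + if j' ∈ s then u i * v j' else 0).updateCol a
            (fun i => M i a + u i * v a) := by
      ext i j'
      by_cases h : j' = a
      · subst h; rw [updateCol_self]; simp
      · rw [updateCol_ne h]
        simp [Finset.mem_insert, h]
    set N := (Matrix.of fun i j' => M i j' + if j' ∈ s then u i * v j' else 0)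
      with hNdef
    have hcol : (fun i => M i a + u i * v a) = (fun i => M i a) + (v a • u) := by
      funext i; simp [mul_comm]
    have hNs : N.updateCol a (fun i => M i a) = N := by
      ext i j'
      by_cases h : j' = a
      · subst h; rw [updateCol_self, hNdef]
        simp [ha]
      · rw [updateCol_ne h]
    rw [hN, my_updateCol_comm _ (Ne.symm hja), hcol, det_updateCol_add,
      det_updateCol_smul]
    have hz : det ((N.updateCol j u).updateCol a u) = 0 := by
      apply det_zero_of_column_eq (Ne.symm hja)
      intro r
      rw [updateCol_self, my_updateCol_comm _ hja, updateCol_self]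
    rw [hz, mul_zero, add_zero, my_updateCol_comm _ hja, hNs, ih j hjs]

/-- Rank-one update of a determinant (matrix determinant lemma, general ring). -/
lemma my_detB {k : ℕ} (M : Matrix (Fin k) (Fin k) R) (u v : Fin k → R) :
    det (M + vecMulVec u v) = det M + ∑ j, v j * det (M.updateCol j u) := by
  have main : ∀ s : Finset (Fin k),
      det (Matrix.of fun i j => M i j + if j ∈ s then u i * v j else 0)
        = det M + ∑ j ∈ s, v j * det (M.updateCol j u) := by
    intro s
    induction s using Finset.induction_on with
    | empty =>
      have h0 : (Matrix.of fun i j => M i j + if j ∈ (∅ : Finset (Fin k)) then u i * v j else 0)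
          = M := by ext i j; simp
      rw [h0]; simp
    | @insert a s ha ih =>
      have hN : (Matrix.of fun i j' => M i j' + if j' ∈ insert a s then u i * v j' else 0)
          = (Matrix.of fun i j' => M i j' + if j' ∈ s then u i * v j' else 0).updateCol a
              (fun i => M i a + u i * v a) := by
        ext i j'
        by_cases h : j' = a
        · subst h; rw [updateCol_self]; simp
        · rw [updateCol_ne h]
          simp [Finset.mem_insert, h]
      set N := (Matrix.of fun i j' => M i j' + if j' ∈ s then u i * v j' else 0)
        with hNdef
      have hcol : (fun i => M i a + u i * v a) = (fun i => M i a) + (v a • u) := by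
        funext i; simp [mul_comm]
      rw [hN, hcol, det_updateCol_add, det_updateCol_smul]
      have hNa : N.updateCol a (fun i => M i a) = N := by
        ext i j'
        by_cases h : j' = a
        · subst h; rw [updateCol_self, hNdef]
          simp [ha]
        · rw [updateCol_ne h]
      rw [hNa, ih, my_subB M u v s a ha, Finset.sum_insert ha]
      ring
  have huniv := main Finset.univ
  have hM : (M + vecMulVec u v)
      = Matrix.of fun i j => M i j + if j ∈ (Finset.univ : Finset (Fin k)) then u i * v j else 0 := by
    ext i j; simp [vecMulVec_apply]
  rw [hM, huniv]

lemma my_det_updateCol_finset_sum {k : ℕ} (P : Matrix (Fin k) (Fin k) R) (j : Fin k)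
    {ι : Type*} [DecidableEq ι] (s : Finset ι) (w : ι → Fin k → R) :
    det (P.updateCol j (∑ i ∈ s, w i)) = ∑ i ∈ s, det (P.updateCol j (w i)) := by
  induction s using Finset.induction_on with
  | empty =>
    rw [Finset.sum_empty, Finset.sum_empty]
    have : (0 : Fin k → R) = (0 : R) • (0 : Fin k → R) := by simp
    rw [this, det_updateCol_smul, zero_mul]
  | @insert a s ha ih =>
    rw [Finset.sum_insert ha, Finset.sum_insert ha, det_updateCol_add, ih]

/-- One step: `(1-∂) det(M + X•W) = ∑ q_t • det(M - u_t u_tᵀ + X•W)`. -/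
lemma my_keyC {k m : ℕ} (M : Matrix (Fin k) (Fin k) R) (u : Fin m → Fin k → R)
    (q : Fin m → R) (hq1 : ∑ i, q i = 1) :
    det ((M.map C : Matrix (Fin k) (Fin k) R[X])
          + (X : R[X]) • (∑ i, q i • vecMulVec (u i) (u i)).map C)
      - derivative (det ((M.map C : Matrix (Fin k) (Fin k) R[X])
          + (X : R[X]) • (∑ i, q i • vecMulVec (u i) (u i)).map C))
      = ∑ t, Polynomial.C (q t) *
          det (((M - vecMulVec (u t) (u t)).map C : Matrix (Fin k) (Fin k) R[X])
            + (X : R[X]) • (∑ i, q i • vecMulVec (u i) (u i)).map C) := by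
  set W : Matrix (Fin k) (Fin k) R := ∑ i, q i • vecMulVec (u i) (u i) with hW
  set P : Matrix (Fin k) (Fin k) R[X] := M.map C + (X : R[X]) • W.map C with hP
  -- derivative of det P
  have hder : derivative (det P) = ∑ j, det (P.updateCol j fun i => Polynomial.C (W i j)) := by
    have hc : ∀ j : Fin k, (fun i => derivative (P i j)) = fun i => Polynomial.C (W i j) := by
      intro j; funext i
      simp [hP, Matrix.add_apply, Matrix.smul_apply, Matrix.map_apply, smul_eq_mul,
        derivative_mul]
    rw [my_derivative_det]
    exact Finset.sum_congr rfl fun j _ => by rw [hc j]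
  -- expand each column determinant
  have hcolsum : ∀ j, det (P.updateCol j fun i => Polynomial.C (W i j))
      = ∑ t, Polynomial.C (q t) * Polynomial.C (u t j)
          * det (P.updateCol j fun i => Polynomial.C (u t i)) := by
    intro j
    have hw : (fun i => Polynomial.C (W i j))
        = ∑ t, (Polynomial.C (q t) * Polynomial.C (u t j)) •
            (fun i => Polynomial.C (u t i)) := by
      funext i
      have : W i j = ∑ t, q t * (u t i * u t j) := by
        simp [hW, Matrix.sum_apply, Matrix.smul_apply, vecMulVec_apply]
      rw [this, map_sum]
      rw [Finset.sum_apply]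
      refine Finset.sum_congr rfl fun t _ => ?_
      simp [mul_comm, mul_left_comm]
    rw [hw, my_det_updateCol_finset_sum]
    refine Finset.sum_congr rfl fun t _ => ?_
    rw [det_updateCol_smul]
  -- rank-one update of each summand on the RHS
  have hrk : ∀ t : Fin m,
      det (((M - vecMulVec (u t) (u t)).map C : Matrix (Fin k) (Fin k) R[X])
          + (X : R[X]) • W.map C)
        = det P - ∑ j, Polynomial.C (u t j)
            * det (P.updateCol j fun i => Polynomial.C (u t i)) := by
    intro t
    have h1 : ((M - vecMulVec (u t) (u t)).map C : Matrix (Fin k) (Fin k) R[X])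
          + (X : R[X]) • W.map C
        = P + vecMulVec (fun i => Polynomial.C (u t i)) (fun j => -Polynomial.C (u t j)) := by
      ext i j
      simp [hP, Matrix.sub_apply, Matrix.add_apply, Matrix.map_apply, vecMulVec_apply]
      ring
    rw [h1, my_detB]
    rw [sub_eq_add_neg, ← Finset.sum_neg_distrib]
    congr 1
    refine Finset.sum_congr rfl fun j _ => ?_
    ring
  calc det P - derivative (det P)
      = (∑ t, Polynomial.C (q t)) * det P
        - ∑ j, ∑ t, Polynomial.C (q t) * Polynomial.C (u t j)
            * det (P.updateCol j fun i => Polynomial.C (u t i)) := by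
        rw [← map_sum Polynomial.C q Finset.univ, hq1, Polynomial.C_1, one_mul, hder]
        congr 1
        exact Finset.sum_congr rfl fun j _ => hcolsum j
    _ = ∑ t, Polynomial.C (q t) *
          (det P - ∑ j, Polynomial.C (u t j)
            * det (P.updateCol j fun i => Polynomial.C (u t i))) := by
        rw [Finset.sum_mul, Finset.sum_comm]
        rw [← Finset.sum_sub_distrib]
        refine Finset.sum_congr rfl fun t _ => ?_
        rw [mul_sub, Finset.mul_sum]
        congr 1
        refine Finset.sum_congr rfl fun j _ => ?_
        ring
    _ = _ := by
        refine Finset.sum_congr rfl fun t _ => ?_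
        rw [hrk t]

lemma my_iterate_ds {ι : Type*} [DecidableEq ι] (ℓ : ℕ) (s : Finset ι) (a : ι → R) (h : ι → R[X]) :
    (fun r : R[X] => r - derivative r)^[ℓ] (∑ t ∈ s, Polynomial.C (a t) * h t)
      = ∑ t ∈ s, Polynomial.C (a t) * (fun r : R[X] => r - derivative r)^[ℓ] (h t) := by
  induction ℓ generalizing h with
  | zero => simp
  | succ ℓ ih =>
    rw [Function.iterate_succ_apply]
    have hstep : (∑ t ∈ s, Polynomial.C (a t) * h t)
          - derivative (∑ t ∈ s, Polynomial.C (a t) * h t)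
        = ∑ t ∈ s, Polynomial.C (a t) * (h t - derivative (h t)) := by
      rw [map_sum, ← Finset.sum_sub_distrib]
      refine Finset.sum_congr rfl fun t _ => ?_
      rw [derivative_C_mul]
      ring
    rw [hstep, ih]
    simp only [Function.iterate_succ_apply]

/-- Main induction. -/
lemma my_keyD {k m : ℕ} (u : Fin m → Fin k → R) (q : Fin m → R) (hq1 : ∑ i, q i = 1)
    (ℓ : ℕ) :
    ∀ M : Matrix (Fin k) (Fin k) R,
      Polynomial.eval (0 : R) ((fun r : R[X] => r - derivative r)^[ℓ]
          (det ((M.map C : Matrix (Fin k) (Fin k) R[X])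
            + (X : R[X]) • (∑ i, q i • vecMulVec (u i) (u i)).map C)))
        = ∑ s : Fin ℓ → Fin m, (∏ i, q (s i)) *
            det (M - ∑ i, vecMulVec (u (s i)) (u (s i))) := by
  induction ℓ with
  | zero =>
    intro M
    rw [Function.iterate_zero_apply, eval_det_add_X_smul]
    have h1 : (M.map (⇑(C : R →+* R[X]))).det = Polynomial.C (M.det) := by
      rw [← RingHom.mapMatrix_apply, ← RingHom.map_det]
    rw [h1, eval_C]
    simp
  | succ ℓ ih =>
    intro M
    rw [Function.iterate_succ_apply, my_keyC M u q hq1, my_iterate_ds]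
    rw [eval_finset_sum]
    simp only [eval_mul, eval_C]
    have hih : ∀ t : Fin m,
        Polynomial.eval (0 : R) ((fun r : R[X] => r - derivative r)^[ℓ]
            (det (((M - vecMulVec (u t) (u t)).map C : Matrix (Fin k) (Fin k) R[X])
              + (X : R[X]) • (∑ i, q i • vecMulVec (u i) (u i)).map C)))
          = ∑ s : Fin ℓ → Fin m, (∏ i, q (s i)) *
              det (M - vecMulVec (u t) (u t) - ∑ i, vecMulVec (u (s i)) (u (s i))) :=
      fun t => ih (M - vecMulVec (u t) (u t))
    rw [Finset.sum_congr rfl fun t _ => by rw [hih t]]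
    rw [← Equiv.sum_comp (Fin.consEquiv fun _ => Fin m)
      (fun s : Fin (ℓ + 1) → Fin m => (∏ i, q (s i)) *
        det (M - ∑ i, vecMulVec (u (s i)) (u (s i))))]
    rw [Fintype.sum_prod_type]
    refine Finset.sum_congr rfl fun t _ => ?_
    rw [Finset.mul_sum]
    refine Finset.sum_congr rfl fun s _ => ?_
    have he : (Fin.consEquiv fun _ => Fin m) (t, s) = Fin.cons t s := rfl
    rw [he, Fin.prod_univ_succ, Fin.sum_univ_succ]
    simp only [Fin.cons_zero, Fin.cons_succ]
    rw [sub_sub]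
    ring

end Aux

/-- Partial-assignment polynomial formula: if `r_1,…,r_ℓ` are i.i.d. random vectors
taking value `a_i` (the `i`-th column of `A`) with probability `p_i` and
`E[r rᵀ] = B = A Aᵀ / c`, then for any symmetric `C`,
`E det(xI - C - ∑ r_i r_iᵀ) = (1 - ∂_z)^ℓ det(xI - C + zB)|_{z=0}`.
The bivariate polynomial `det(xI - C + zB)` is taken in `(ℝ[x])[z]`. -/
theorem expected_charpoly_partial_assignment
    (n m ℓ : ℕ) (hℓ : 1 ≤ ℓ)
    (A : Matrix (Fin n) (Fin m) ℝ) (c : ℝ) (hc : 0 < c)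
    (p : Fin m → ℝ) (hp : ∀ i, 0 ≤ p i) (hp1 : ∑ i, p i = 1)
    (hE : ∑ i, p i • Matrix.vecMulVec (fun j => A j i) (fun j => A j i)
        = c⁻¹ • (A * Aᵀ))
    (Cm : Matrix (Fin n) (Fin n) ℝ) (hC : Cm.IsSymm) :
    (∑ s : Fin ℓ → Fin m,
        C (∏ i, p (s i)) *
          (Cm + ∑ i, Matrix.vecMulVec (fun j => A j (s i)) (fun j => A j (s i))).charpoly)
      =
      Polynomial.eval (0 : Polynomial ℝ)
        ((fun q : Polynomial (Polynomial ℝ) => q - Polynomial.derivative q)^[ℓ]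
          (Matrix.det
            ((Polynomial.C (Polynomial.X : Polynomial ℝ)) •
                (1 : Matrix (Fin n) (Fin n) (Polynomial (Polynomial ℝ)))
              - Cm.map (fun a => Polynomial.C (Polynomial.C a))
              + (Polynomial.X : Polynomial (Polynomial ℝ)) •
                  ((c⁻¹ • (A * Aᵀ)).map (fun a => Polynomial.C (Polynomial.C a)))))) := by
  classical
  have hq1 : (∑ i, Polynomial.C (p i)) = (1 : Polynomial ℝ) := by
    rw [← map_sum, hp1, Polynomial.C_1]
  have key := my_keyD (R := Polynomial ℝ)
      (u := fun t j => Polynomial.C (A j t)) (q := fun t => Polynomial.C (p t)) hq1 ℓ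
      ((X : Polynomial ℝ) • (1 : Matrix (Fin n) (Fin n) (Polynomial ℝ)) - Cm.map Polynomial.C)
  have hWmat : (∑ i, Polynomial.C (p i) •
        vecMulVec (fun j => Polynomial.C (A j i)) (fun j => Polynomial.C (A j i)))
      = ((c⁻¹ • (A * Aᵀ)).map Polynomial.C : Matrix (Fin n) (Fin n) (Polynomial ℝ)) := by
    rw [← hE]
    ext i j
    simp [Matrix.sum_apply, Matrix.smul_apply, vecMulVec_apply, Matrix.map_apply,
      smul_eq_mul]
  rw [hWmat] at key
  have hM : (((X : Polynomial ℝ) • (1 : Matrix (Fin n) (Fin n) (Polynomial ℝ))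
          - Cm.map Polynomial.C).map Polynomial.C)
        + (X : Polynomial (Polynomial ℝ)) •
            (((c⁻¹ • (A * Aᵀ)).map Polynomial.C).map Polynomial.C)
      = (Polynomial.C (Polynomial.X : Polynomial ℝ)) •
            (1 : Matrix (Fin n) (Fin n) (Polynomial (Polynomial ℝ)))
          - Cm.map (fun a => Polynomial.C (Polynomial.C a))
          + (Polynomial.X : Polynomial (Polynomial ℝ)) •
              ((c⁻¹ • (A * Aᵀ)).map (fun a => Polynomial.C (Polynomial.C a))) := by
    ext i j
    by_cases h : i = j <;>
      simp [h, Matrix.map_apply, Matrix.sub_apply, Matrix.add_apply, Matrix.smul_apply,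
        Matrix.one_apply, smul_eq_mul, map_sub]
  rw [hM] at key
  refine Eq.trans (Finset.sum_congr rfl fun s _ => ?_) key.symm
  rw [← map_prod]
  congr 1
  show ((Cm + ∑ i, vecMulVec (fun j => A j (s i)) (fun j => A j (s i))).charmatrix).det = _
  congr 1
  ext i j
  by_cases h : i = j <;>
    simp [h, charmatrix_apply_eq, charmatrix_apply_ne, Matrix.sub_apply, Matrix.smul_apply,
      Matrix.one_apply, Matrix.sum_apply, Matrix.add_apply, vecMulVec_apply, map_sub, sub_sub,
      smul_eq_mul] <;> ring
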